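/- The total length of a geodesic net N in ℝⁿ equals −∑_{v∈S} ⟨v, Imb(v)⟩, where the sum runs over the set S of unbalanced vertices and each vertex v is regarded as a vector in ℝⁿ. -/

import Mathlib

open RealInnerProductSpace

/-- The total length of a geodesic net in ℝⁿ (each edge counted once; summing over
ordered pairs counts each edge twice, whence the factor ½) equals
`-∑_{v ∈ S} ⟪v, Imb v⟫`, where `S` is the set of unbalanced vertices. -/
theorem length_eq_neg_sum_inner_imbalance (n : ℕ)
    (V S : Finset (EuclideanSpace ℝ (Fin n)))
    (E : EuclideanSpace ℝ (Fin n) → EuclideanSpace ℝ (Fin n) → Prop)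
    [DecidableRel E]
    (hsymm : Symmetric E)
    (hne : ∀ v w, E v w → v ≠ w)
    (hmem : ∀ v w, E v w → v ∈ V ∧ w ∈ V)
    (hSV : S ⊆ V)
    (Imb : EuclideanSpace ℝ (Fin n) → EuclideanSpace ℝ (Fin n))
    (hImb : ∀ v, Imb v = ∑ w ∈ V.filter (fun w => E v w), (‖w - v‖)⁻¹ • (w - v))
    (hbal : ∀ v ∈ V, v ∉ S → Imb v = 0) :
    (1 / 2 : ℝ) * ∑ v ∈ V, ∑ w ∈ V.filter (fun w => E v w), ‖w - v‖
      = -∑ v ∈ S, (inner ℝ v (Imb v) : ℝ) := by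
  have hS : ∑ v ∈ S, (inner ℝ v (Imb v) : ℝ) = ∑ v ∈ V, (inner ℝ v (Imb v) : ℝ) := by
    refine Finset.sum_subset hSV ?_
    intro v hv hvS
    rw [hbal v hv hvS, inner_zero_right]
  set f : EuclideanSpace ℝ (Fin n) → EuclideanSpace ℝ (Fin n) → ℝ :=
    fun v w => if E v w then (‖w - v‖)⁻¹ * (inner ℝ v (w - v) : ℝ) else 0 with hf
  have hV : ∑ v ∈ V, (inner ℝ v (Imb v) : ℝ) = ∑ v ∈ V, ∑ w ∈ V, f v w := by
    refine Finset.sum_congr rfl fun v _ => ?_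
    rw [hImb v, inner_sum, ← Finset.sum_filter]
    exact Finset.sum_congr rfl fun w _ => real_inner_smul_right _ _ _
  have key : ∀ v w, f v w + f w v = if E v w then -‖w - v‖ else 0 := by
    intro v w
    by_cases h : E v w
    · have h' : E w v := hsymm h
      have hnz : ‖w - v‖ ≠ 0 := by
        simpa [sub_eq_zero] using (hne v w h).symm
      simp only [hf, if_pos h, if_pos h']
      rw [norm_sub_rev v w]
      have : (inner ℝ v (w - v) : ℝ) + (inner ℝ w (v - w) : ℝ)
          = -(inner ℝ (w - v) (w - v) : ℝ) := by
        have h1 : (inner ℝ w (v - w) : ℝ) = -(inner ℝ w (w - v) : ℝ) := by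
          rw [← inner_neg_right]; congr 1; abel
        rw [h1, inner_sub_left]; ring
      rw [← mul_add, this, real_inner_self_eq_norm_sq]
      field_simp
    · simp [hf, if_neg h, if_neg (fun h' => h (hsymm h'))]
  have hdouble : (2 : ℝ) * ∑ v ∈ V, ∑ w ∈ V, f v w
      = ∑ v ∈ V, ∑ w ∈ V, (f v w + f w v) := by
    simp only [Finset.sum_add_distrib]
    rw [two_mul]
    congr 1
    exact Finset.sum_comm
  have hdouble' : ∑ v ∈ V, ∑ w ∈ V, (f v w + f w v)
      = -∑ v ∈ V, ∑ w ∈ V.filter (fun w => E v w), ‖w - v‖ := by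
    rw [← Finset.sum_neg_distrib]
    refine Finset.sum_congr rfl fun v _ => ?_
    rw [← Finset.sum_neg_distrib, Finset.sum_filter]
    refine Finset.sum_congr rfl fun w _ => ?_
    rw [key]
  have : ∑ v ∈ S, (inner ℝ v (Imb v) : ℝ)
      = -(1 / 2 : ℝ) * ∑ v ∈ V, ∑ w ∈ V.filter (fun w => E v w), ‖w - v‖ := by
    rw [hS, hV]
    have := hdouble.trans hdouble'
    linarith
  rw [this]; ring
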